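/- Let u : ℕ → ℝ with u ∈ Λ, and let (h,β) ∈ Γ(u) be decreasing from N ∈ ℕ with S(u,h) ∩ [N,∞) ≠ ∅ (usefully decreasing). Then: (1) the sequence (β_k^k)_{k∈ℕ} converges to 0 and is strictly decreasing for k ≥ N, i.e. β_{k+1}^{k+1} < β_k^k for all k ≥ N; (2) for all n ≥ N, L(u) ≤ h_n(0). -/
import Mathlib


open Set Filter

/-- Ω([0,1]): functions ℝ → ℝ strictly increasing and continuous on [0,1]. -/
def OmegaFun (f : ℝ → ℝ) : Prop :=
  StrictMonoOn f (Set.Icc 0 1) ∧ ContinuousOn f (Set.Icc 0 1)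

/-- (h,β) ∈ Γ(u): h k ∈ Ω([0,1]), β k ∈ (0,1) and u k ≤ h k (β k ^ k) for all k. -/
def InGamma (u : ℕ → ℝ) (h : ℕ → ℝ → ℝ) (β : ℕ → ℝ) : Prop :=
  (∀ k, OmegaFun (h k)) ∧ (∀ k, β k ∈ Set.Ioo (0:ℝ) 1) ∧ (∀ k, u k ≤ h k (β k ^ k))

/-- (h,β) is decreasing from N. -/
def DecreasingFrom (h : ℕ → ℝ → ℝ) (β : ℕ → ℝ) (N : ℕ) : Prop :=
  ∀ n, N ≤ n → (∀ x ∈ Set.Icc (0:ℝ) 1, h (n+1) x ≤ h n x) ∧ β (n+1) ≤ β n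

/-- V(u) is the supremum of u; u ∈ Λ means u is bounded above. -/
noncomputable def V (u : ℕ → ℝ) : ℝ := sSup (Set.range u)

def MemLambda (u : ℕ → ℝ) : Prop := BddAbove (Set.range u)

/-- L(u) is the limsup of u in the extended reals. -/
noncomputable def L (u : ℕ → ℝ) : EReal :=
  Filter.limsup (fun n => ((u n : ℝ) : EReal)) Filter.atTop

/-- for u ∈ Λ and (h,β) ∈ Γ(u) usefully decreasing from N:
(β_k^k) tends to 0, is strictly decreasing from N, and L(u) ≤ h n 0 for n ≥ N. -/
theorem usefully_decreasing_properties (u : ℕ → ℝ) (hu : MemLambda u)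
    (h : ℕ → ℝ → ℝ) (β : ℕ → ℝ) (N : ℕ)
    (hΓ : InGamma u h β) (hdec : DecreasingFrom h β N)
    (husef : ∃ k : ℕ, N ≤ k ∧ h k 0 < u k) :
    Filter.Tendsto (fun k : ℕ => β k ^ k) Filter.atTop (nhds 0) ∧
    (∀ k : ℕ, N ≤ k → β (k+1) ^ (k+1) < β k ^ k) ∧
    (∀ n : ℕ, N ≤ n → L u ≤ ((h n 0 : ℝ) : EReal)) := by
  obtain ⟨hΩ, hβ, hub⟩ := hΓ
  -- β is antitone from N
  have hβmono : ∀ m k : ℕ, N ≤ m → m ≤ k → β k ≤ β m := by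
    intro m k hNm hmk
    induction k, hmk using Nat.le_induction with
    | base => exact le_rfl
    | succ n hn ih => exact le_trans (hdec n (le_trans hNm hn)).2 ih
  have hhmono : ∀ m k : ℕ, N ≤ m → m ≤ k → ∀ x ∈ Set.Icc (0:ℝ) 1, h k x ≤ h m x := by
    intro m k hNm hmk
    induction k, hmk using Nat.le_induction with
    | base => intro x _; exact le_rfl
    | succ n hn ih =>
      intro x hx
      exact le_trans ((hdec n (le_trans hNm hn)).1 x hx) (ih x hx)
  have hmem : ∀ k : ℕ, β k ^ k ∈ Set.Icc (0:ℝ) 1 :=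
    fun k => ⟨pow_nonneg (hβ k).1.le k, pow_le_one₀ (hβ k).1.le (hβ k).2.le⟩
  -- part 1
  have h1 : Filter.Tendsto (fun k : ℕ => β k ^ k) Filter.atTop (nhds 0) := by
    have hg : Filter.Tendsto (fun k : ℕ => β N ^ k) Filter.atTop (nhds 0) :=
      tendsto_pow_atTop_nhds_zero_of_lt_one (hβ N).1.le (hβ N).2
    refine tendsto_of_tendsto_of_tendsto_of_le_of_le' tendsto_const_nhds hg ?_ ?_
    · exact Filter.Eventually.of_forall fun k => (hmem k).1
    · filter_upwards [Filter.eventually_ge_atTop N] with k hk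
      exact pow_le_pow_left₀ (hβ k).1.le (hβmono N k le_rfl hk) k
  have h2 : ∀ k : ℕ, N ≤ k → β (k+1) ^ (k+1) < β k ^ k := by
    intro k hk
    calc β (k+1) ^ (k+1) ≤ β k ^ (k+1) :=
          pow_le_pow_left₀ (hβ (k+1)).1.le (hdec k hk).2 (k+1)
      _ < β k ^ k := by
          have := pow_lt_pow_right_of_lt_one₀ (hβ k).1 (hβ k).2 (Nat.lt_succ_self k)
          exact this
  refine ⟨h1, h2, ?_⟩
  intro n hn
  -- h n (β k ^ k) → h n 0
  have hcont : Filter.Tendsto (fun k : ℕ => h n (β k ^ k)) Filter.atTop (nhds (h n 0)) := by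
    have hc : ContinuousWithinAt (h n) (Set.Icc 0 1) 0 :=
      (hΩ n).2 0 ⟨le_refl 0, zero_le_one⟩
    exact hc.tendsto.comp
      (tendsto_nhdsWithin_of_tendsto_nhds_of_eventually_within _ h1
        (Filter.Eventually.of_forall hmem))
  have hcontE : Filter.Tendsto (fun k : ℕ => ((h n (β k ^ k) : ℝ) : EReal)) Filter.atTop
      (nhds ((h n 0 : ℝ) : EReal)) :=
    (continuous_coe_real_ereal.tendsto _).comp hcont
  have hle : ∀ᶠ k in Filter.atTop, ((u k : ℝ) : EReal) ≤ ((h n (β k ^ k) : ℝ) : EReal) := by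
    filter_upwards [Filter.eventually_ge_atTop n] with k hk
    exact_mod_cast le_trans (hub k) (hhmono n k hn hk _ (hmem k))
  calc L u ≤ Filter.limsup (fun k : ℕ => ((h n (β k ^ k) : ℝ) : EReal)) Filter.atTop :=
        Filter.limsup_le_limsup hle
    _ = ((h n 0 : ℝ) : EReal) := hcontE.limsup_eq
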